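/- Let N₀, M be positive integers, let χ ∈ {0,1}^{N₀}, and for each ñ = 1, …, N₀ let h̃_ñ ∈ ℂ^M be a Rician channel block with parameters (ξ_ñ, β_{L,ñ}, β_{N,ñ}, a_ñ), where the blocks h̃_1, …, h̃_{N₀} are jointly independent. Set β_ñ = ξ_ñ·β_{L,ñ} + β_{N,ñ}. Then E[(Σ_{ñ=1}^{N₀} χ_ñ ‖h̃_ñ‖²)²] = M²·(Σ_{ñ} χ_ñ β_ñ)² + M·Σ_{ñ} χ_ñ·(β_{N,ñ}² + 2·ξ_ñ·β_{L,ñ}·β_{N,ñ}). -/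

import Mathlib

open MeasureTheory ProbabilityTheory Finset

noncomputable section

/-- The uniform distribution on `[0, 2π)`. -/
def uniformAngle : Measure ℝ :=
  (ENNReal.ofReal (2 * Real.pi))⁻¹ • (volume.restrict (Set.Ico (0 : ℝ) (2 * Real.pi)))

lemma uniformAngle_integral (f : ℝ → ℝ) :
    ∫ x, f x ∂uniformAngle = (2 * Real.pi)⁻¹ * ∫ x in (0:ℝ)..(2 * Real.pi), f x := by
  rw [uniformAngle, integral_smul_measure,
    intervalIntegral.integral_of_le (by positivity),
    ← MeasureTheory.setIntegral_congr_set MeasureTheory.Ico_ae_eq_Ioc]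
  simp [ENNReal.toReal_inv, ENNReal.toReal_ofReal Real.two_pi_pos.le, Real.pi_nonneg]

lemma uniformAngle_cos : ∫ x, Real.cos x ∂uniformAngle = 0 := by
  rw [uniformAngle_integral, integral_cos]; simp

lemma uniformAngle_sin : ∫ x, Real.sin x ∂uniformAngle = 0 := by
  rw [uniformAngle_integral, integral_sin]; simp

lemma uniformAngle_cos_sq : ∫ x, Real.cos x ^ 2 ∂uniformAngle = 1/2 := by
  rw [uniformAngle_integral, integral_cos_sq]
  simp [Real.cos_two_pi, Real.sin_two_pi]
  field_simp

lemma uniformAngle_sin_sq : ∫ x, Real.sin x ^ 2 ∂uniformAngle = 1/2 := by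
  rw [uniformAngle_integral, integral_sin_sq]
  simp [Real.cos_two_pi, Real.sin_two_pi]
  field_simp

lemma uniformAngle_sin_cos : ∫ x, Real.sin x * Real.cos x ∂uniformAngle = 0 := by
  rw [uniformAngle_integral, integral_sin_mul_cos₁]
  simp [Real.sin_two_pi]

def qfun : ℂ → ℝ := fun z => ‖z‖ ^ 2
def rfun (A : ℂ) : ℂ → ℝ := fun z => (A * (starRingEnd ℂ) z).re
def jfun (A : ℂ) : ℂ → ℝ := fun z => (A * (starRingEnd ℂ) z).im

lemma qfun_meas : Measurable qfun := (continuous_norm.pow 2).measurable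
lemma rfun_meas (A : ℂ) : Measurable (rfun A) :=
  (Complex.continuous_re.comp (continuous_const.mul continuous_star)).measurable
lemma jfun_meas (A : ℂ) : Measurable (jfun A) :=
  (Complex.continuous_im.comp (continuous_const.mul continuous_star)).measurable

lemma qfun_bound (z : ℂ) : |qfun z| ≤ 1 + ‖z‖ ^ 2 := by
  have h0 : (0:ℝ) ≤ ‖z‖ ^ 2 := sq_nonneg _
  rw [qfun, abs_of_nonneg h0]; linarith

lemma rfun_bound (A : ℂ) (hA : ‖A‖ = 1) (z : ℂ) :
    |rfun A z| ≤ 1 + ‖z‖ ^ 2 := by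
  have h1 : |rfun A z| ≤ ‖z‖ := by
    calc |(A * (starRingEnd ℂ) z).re| ≤ ‖A * (starRingEnd ℂ) z‖ :=
          Complex.abs_re_le_norm _
      _ = ‖z‖ := by rw [norm_mul, hA, one_mul, Complex.norm_conj]
  nlinarith [norm_nonneg z, sq_nonneg (‖z‖ - 1)]

lemma jfun_bound (A : ℂ) (hA : ‖A‖ = 1) (z : ℂ) :
    |jfun A z| ≤ 1 + ‖z‖ ^ 2 := by
  have h1 : |jfun A z| ≤ ‖z‖ := by
    calc |(A * (starRingEnd ℂ) z).im| ≤ ‖A * (starRingEnd ℂ) z‖ :=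
          Complex.abs_im_le_norm _
      _ = ‖z‖ := by rw [norm_mul, hA, one_mul, Complex.norm_conj]
  nlinarith [norm_nonneg z, sq_nonneg (‖z‖ - 1)]

lemma rj_sq (A : ℂ) (hA : ‖A‖ = 1) (z : ℂ) :
    rfun A z * rfun A z + jfun A z * jfun A z = qfun z := by
  have h : (A * (starRingEnd ℂ) z).re ^ 2 + (A * (starRingEnd ℂ) z).im ^ 2
      = ‖A * (starRingEnd ℂ) z‖ ^ 2 := by
    rw [Complex.sq_norm, Complex.normSq_apply]; ring
  have h2 : ‖A * (starRingEnd ℂ) z‖ = ‖z‖ := by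
    rw [norm_mul, hA, one_mul, Complex.norm_conj]
  rw [rfun, jfun, qfun, ← h2, ← h]; ring

lemma rfun_eq (A z : ℂ) : rfun A z = A.re * z.re + A.im * z.im := by
  rw [rfun]; simp [Complex.mul_re]

lemma jfun_eq (A z : ℂ) : jfun A z = A.im * z.re - A.re * z.im := by
  rw [jfun]; simp [Complex.mul_im]; ring

lemma coord_abs (c t : ℝ) (A g : ℂ) (hA : ‖A‖ = 1) :
    ‖(c:ℂ) * Complex.exp (-(Complex.I * t)) * A + g‖^2
      = c^2 + ‖g‖^2
        + 2*c*(Real.cos t * (A * (starRingEnd ℂ) g).re + Real.sin t * (A * (starRingEnd ℂ) g).im) := by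
  have hA' : A.re^2 + A.im^2 = 1 := by
    have := Complex.sq_norm A
    rw [hA] at this
    simpa [Complex.normSq_apply, sq] using this.symm
  have h1 : Real.cos t ^2 + Real.sin t ^2 = 1 := Real.cos_sq_add_sin_sq t
  rw [Complex.sq_norm, Complex.sq_norm]
  simp only [Complex.normSq_apply, Complex.exp_re, Complex.exp_im, Complex.add_re, Complex.add_im,
    Complex.mul_re, Complex.mul_im, Complex.neg_re, Complex.neg_im, Complex.I_re, Complex.I_im,
    Complex.ofReal_re, Complex.ofReal_im, Complex.conj_re, Complex.conj_im]
  ring_nf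
  simp only [Real.exp_zero, Real.cos_neg, Real.sin_neg]
  linear_combination (c^2*(Real.cos t^2+Real.sin t^2)) * hA' + c^2 * h1


section core
variable {Ω : Type*} [MeasurableSpace Ω] {μ : Measure Ω} [IsProbabilityMeasure μ]
  {M : ℕ} {βN : ℝ} {a : Fin M → ℂ} {ψ : Ω → ℝ} {g : Ω → Fin M → ℂ}

lemma single_int (hgm : Measurable g)
    (hint4 : ∀ m, Integrable (fun ω => ‖g ω m‖ ^ 4) μ)
    (φ : ℂ → ℝ) (hφ : Measurable φ) (hb : ∀ z, |φ z| ≤ 1 + ‖z‖ ^ 2) (m : Fin M) :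
    Integrable (fun ω => φ (g ω m)) μ := by
  have hgmm : Measurable fun ω => g ω m := (measurable_pi_apply m).comp hgm
  refine Integrable.mono' ((integrable_const (2:ℝ)).add (hint4 m))
    (hφ.comp hgmm).aestronglyMeasurable ?_
  filter_upwards with ω
  have := hb (g ω m)
  have h4 : ‖g ω m‖ ^ 2 ≤ 1 + ‖g ω m‖ ^ 4 := by
    nlinarith [sq_nonneg (‖g ω m‖ ^ 2 - 1)]
  simp only [Real.norm_eq_abs, Pi.add_apply]
  linarith

lemma pair_int (hgm : Measurable g)
    (hgind : iIndepFun (fun m ω => g ω m) μ)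
    (hint4 : ∀ m, Integrable (fun ω => ‖g ω m‖ ^ 4) μ)
    (φ φ' : ℂ → ℝ) (hφ : Measurable φ) (hφ' : Measurable φ')
    (hb : ∀ z, |φ z| ≤ 1 + ‖z‖ ^ 2) (hb' : ∀ z, |φ' z| ≤ 1 + ‖z‖ ^ 2)
    (m k : Fin M) :
    Integrable (fun ω => φ (g ω m) * φ' (g ω k)) μ := by
  rcases eq_or_ne m k with rfl | hmk
  · have hgmm : Measurable fun ω => g ω m := (measurable_pi_apply m).comp hgm
    refine Integrable.mono' ((integrable_const (2:ℝ)).add ((hint4 m).const_mul 2))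
      ((hφ.comp hgmm).mul (hφ'.comp hgmm)).aestronglyMeasurable ?_
    filter_upwards with ω
    have h1 := hb (g ω m); have h2 := hb' (g ω m)
    have h3 : (0:ℝ) ≤ ‖g ω m‖ ^ 2 := sq_nonneg _
    simp only [Real.norm_eq_abs, Pi.add_apply, abs_mul]
    have h4 : |φ (g ω m)| * |φ' (g ω m)|
        ≤ (1 + ‖g ω m‖ ^ 2) * (1 + ‖g ω m‖ ^ 2) :=
      mul_le_mul h1 h2 (abs_nonneg _) (by linarith)
    have h5 : (1 + ‖g ω m‖ ^ 2) * (1 + ‖g ω m‖ ^ 2)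
        ≤ 2 + 2 * ‖g ω m‖ ^ 4 := by
      nlinarith [sq_nonneg (‖g ω m‖ ^ 2 - 1)]
    linarith
  · exact ((hgind.indepFun hmk).comp hφ hφ').integrable_mul
      (single_int hgm hint4 φ hφ hb m) (single_int hgm hint4 φ' hφ' hb' k)

omit [IsProbabilityMeasure μ] in
lemma pair_exp (hgm : Measurable g)
    (hgind : iIndepFun (fun m ω => g ω m) μ)
    (φ φ' : ℂ → ℝ) (hφ : Measurable φ) (hφ' : Measurable φ')
    (m k : Fin M) (hmk : m ≠ k) :
    ∫ ω, φ (g ω m) * φ' (g ω k) ∂μ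
      = (∫ ω, φ (g ω m) ∂μ) * ∫ ω, φ' (g ω k) ∂μ := by
  have h1 : Measurable fun ω => g ω m := (measurable_pi_apply m).comp hgm
  have h2 : Measurable fun ω => g ω k := (measurable_pi_apply k).comp hgm
  exact ((hgind.indepFun hmk).comp hφ hφ').integral_fun_mul_eq_mul_integral
    (hφ.comp h1).aestronglyMeasurable (hφ'.comp h2).aestronglyMeasurable

lemma sum_prod_int (hgm : Measurable g)
    (hgind : iIndepFun (fun m ω => g ω m) μ)
    (hint4 : ∀ m, Integrable (fun ω => ‖g ω m‖ ^ 4) μ)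
    (φ φ' : Fin M → ℂ → ℝ) (hφ : ∀ m, Measurable (φ m)) (hφ' : ∀ m, Measurable (φ' m))
    (hb : ∀ m z, |φ m z| ≤ 1 + ‖z‖ ^ 2)
    (hb' : ∀ m z, |φ' m z| ≤ 1 + ‖z‖ ^ 2) :
    Integrable (fun ω => (∑ m, φ m (g ω m)) * (∑ k, φ' k (g ω k))) μ := by
  have he : (fun ω => (∑ m, φ m (g ω m)) * (∑ k, φ' k (g ω k)))
      = fun ω => ∑ m, ∑ k, φ m (g ω m) * φ' k (g ω k) := by
    funext ω; rw [Finset.sum_mul_sum]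
  rw [he]
  exact integrable_finset_sum _ fun m _ => integrable_finset_sum _ fun k _ =>
    pair_int hgm hgind hint4 (φ m) (φ' k) (hφ m) (hφ' k) (hb m) (hb' k) m k

end core

section core2
variable {Ω : Type*} [MeasurableSpace Ω] {μ : Measure Ω} [IsProbabilityMeasure μ]
  {M : ℕ} {βN : ℝ} {a : Fin M → ℂ} {ψ : Ω → ℝ} {g : Ω → Fin M → ℂ}

lemma core_moments (hψm : Measurable ψ) (hgm : Measurable g)
    (hmap : μ.map ψ = uniformAngle)
    (hψg : IndepFun ψ g μ)
    (hgind : iIndepFun (fun m ω => g ω m) μ)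
    (hint4 : ∀ m, Integrable (fun ω => ‖g ω m‖ ^ 4) μ)
    (hEg : ∀ m, ∫ ω, g ω m ∂μ = 0)
    (hE2 : ∀ m, ∫ ω, (‖g ω m‖ ^ 2 : ℝ) ∂μ = βN)
    (hE4 : ∀ m, ∫ ω, (‖g ω m‖ ^ 4 : ℝ) ∂μ = 2 * βN ^ 2)
    (hunit : ∀ m, ‖a m‖ = 1) (c : ℝ)
    (S : Ω → ℝ)
    (hS : ∀ ω, S ω = M * c^2 + (∑ m, qfun (g ω m))
        + 2*c*(Real.cos (ψ ω) * ∑ m, rfun (a m) (g ω m)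
             + Real.sin (ψ ω) * ∑ m, jfun (a m) (g ω m))) :
    (Integrable S μ) ∧ (Integrable (fun ω => S ω ^ 2) μ) ∧
    (∫ ω, S ω ∂μ = M * (c^2 + βN)) ∧
    (∫ ω, S ω ^ 2 ∂μ = (M:ℝ)^2*(c^2+βN)^2 + M*(βN^2 + 2*c^2*βN)) := by
  have hgmm : ∀ m, Measurable fun ω => g ω m := fun m => (measurable_pi_apply m).comp hgm
  have hbq : ∀ (_ : Fin M) (z : ℂ), |qfun z| ≤ 1 + ‖z‖ ^ 2 := fun _ => qfun_bound
  have hbr : ∀ m (z : ℂ), |rfun (a m) z| ≤ 1 + ‖z‖ ^ 2 :=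
    fun m => rfun_bound _ (hunit m)
  have hbj : ∀ m (z : ℂ), |jfun (a m) z| ≤ 1 + ‖z‖ ^ 2 :=
    fun m => jfun_bound _ (hunit m)
  have hq_int : ∀ m, Integrable (fun ω => qfun (g ω m)) μ :=
    fun m => single_int hgm hint4 qfun qfun_meas (hbq m) m
  have hr_int : ∀ m, Integrable (fun ω => rfun (a m) (g ω m)) μ :=
    fun m => single_int hgm hint4 _ (rfun_meas _) (hbr m) m
  have hj_int : ∀ m, Integrable (fun ω => jfun (a m) (g ω m)) μ :=
    fun m => single_int hgm hint4 _ (jfun_meas _) (hbj m) m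
  have hG_int : Integrable (fun ω => ∑ m, qfun (g ω m)) μ :=
    integrable_finset_sum _ fun m _ => hq_int m
  have hR_int : Integrable (fun ω => ∑ m, rfun (a m) (g ω m)) μ :=
    integrable_finset_sum _ fun m _ => hr_int m
  have hJ_int : Integrable (fun ω => ∑ m, jfun (a m) (g ω m)) μ :=
    integrable_finset_sum _ fun m _ => hj_int m
  have mGz : Measurable (fun z : Fin M → ℂ => ∑ m, qfun (z m)) :=
    Finset.measurable_sum _ fun m _ => qfun_meas.comp (measurable_pi_apply m)
  have mRz : Measurable (fun z : Fin M → ℂ => ∑ m, rfun (a m) (z m)) :=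
    Finset.measurable_sum _ fun m _ => (rfun_meas _).comp (measurable_pi_apply m)
  have mJz : Measurable (fun z : Fin M → ℂ => ∑ m, jfun (a m) (z m)) :=
    Finset.measurable_sum _ fun m _ => (jfun_meas _).comp (measurable_pi_apply m)
  have pullψ : ∀ (φ : ℝ → ℝ), Measurable φ →
      ∫ ω, φ (ψ ω) ∂μ = ∫ t, φ t ∂uniformAngle := by
    intro φ hφ
    rw [← hmap, integral_map hψm.aemeasurable hφ.aestronglyMeasurable]
  have hmix : ∀ (φu : ℝ → ℝ) (φX : (Fin M → ℂ) → ℝ), Measurable φu → Measurable φX →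
      ∫ ω, φu (ψ ω) * φX (g ω) ∂μ = (∫ t, φu t ∂uniformAngle) * ∫ ω, φX (g ω) ∂μ := by
    intro φu φX h1 h2
    have h3 := (hψg.comp h1 h2).integral_fun_mul_eq_mul_integral
      (h1.comp hψm).aestronglyMeasurable (h2.comp hgm).aestronglyMeasurable
    rw [← pullψ φu h1]
    exact h3
  have hEq : ∀ m, ∫ ω, qfun (g ω m) ∂μ = βN := fun m => hE2 m
  have hEG : ∫ ω, ∑ m, qfun (g ω m) ∂μ = M * βN := by
    rw [integral_finset_sum _ fun m _ => hq_int m]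
    simp [hEq, Finset.card_univ, mul_comm]
  have hgint : ∀ m, Integrable (fun ω => g ω m) μ := by
    intro m
    refine Integrable.mono' ((integrable_const (1:ℝ)).add (hq_int m))
      (hgmm m).aestronglyMeasurable ?_
    filter_upwards with ω
    simp only [Pi.add_apply, qfun]
    nlinarith [sq_nonneg (‖g ω m‖ - 1), norm_nonneg (g ω m)]
  have hEr : ∀ m, ∫ ω, rfun (a m) (g ω m) ∂μ = 0 := by
    intro m
    have h1 : ∫ ω, (g ω m).re ∂μ = 0 := by
      have h := integral_re (hgint m); rw [hEg m] at h; simpa using h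
    have h2 : ∫ ω, (g ω m).im ∂μ = 0 := by
      have h := integral_im (hgint m); rw [hEg m] at h; simpa using h
    have hre : Integrable (fun ω => (g ω m).re) μ := (hgint m).re
    have him : Integrable (fun ω => (g ω m).im) μ := (hgint m).im
    simp_rw [rfun_eq]
    rw [integral_add (hre.const_mul _) (him.const_mul _),
      integral_const_mul, integral_const_mul, h1, h2]
    ring
  have hEj : ∀ m, ∫ ω, jfun (a m) (g ω m) ∂μ = 0 := by
    intro m
    have h1 : ∫ ω, (g ω m).re ∂μ = 0 := by
      have h := integral_re (hgint m); rw [hEg m] at h; simpa using h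
    have h2 : ∫ ω, (g ω m).im ∂μ = 0 := by
      have h := integral_im (hgint m); rw [hEg m] at h; simpa using h
    have hre : Integrable (fun ω => (g ω m).re) μ := (hgint m).re
    have him : Integrable (fun ω => (g ω m).im) μ := (hgint m).im
    simp_rw [jfun_eq]
    rw [integral_sub (hre.const_mul _) (him.const_mul _),
      integral_const_mul, integral_const_mul, h1, h2]
    ring
  -- pair integrabilities
  have Pqq : ∀ m k, Integrable (fun ω => qfun (g ω m) * qfun (g ω k)) μ :=
    fun m k => pair_int hgm hgind hint4 qfun qfun qfun_meas qfun_meas (hbq m) (hbq k) m k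
  have Prr : ∀ m k, Integrable (fun ω => rfun (a m) (g ω m) * rfun (a k) (g ω k)) μ :=
    fun m k => pair_int hgm hgind hint4 _ _ (rfun_meas _) (rfun_meas _) (hbr m) (hbr k) m k
  have Pjj : ∀ m k, Integrable (fun ω => jfun (a m) (g ω m) * jfun (a k) (g ω k)) μ :=
    fun m k => pair_int hgm hgind hint4 _ _ (jfun_meas _) (jfun_meas _) (hbj m) (hbj k) m k
  -- pair expectations
  have hqq : ∀ m k, ∫ ω, qfun (g ω m) * qfun (g ω k) ∂μ
      = βN^2 + (if m = k then βN^2 else 0) := by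
    intro m k
    rcases eq_or_ne m k with rfl | hmk
    · have he : (fun ω => qfun (g ω m) * qfun (g ω m))
          = fun ω => ‖g ω m‖ ^ 4 := by
        funext ω; simp only [qfun]; ring
      rw [he, hE4 m, if_pos rfl]; ring
    · rw [pair_exp hgm hgind qfun qfun qfun_meas qfun_meas m k hmk, hEq m, hEq k,
        if_neg hmk]
      ring
  have hrrjj : ∀ m k, (∫ ω, rfun (a m) (g ω m) * rfun (a k) (g ω k) ∂μ)
      + (∫ ω, jfun (a m) (g ω m) * jfun (a k) (g ω k) ∂μ) = if m = k then βN else 0 := by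
    intro m k
    rcases eq_or_ne m k with rfl | hmk
    · rw [if_pos rfl, ← integral_add (Prr m m) (Pjj m m)]
      simp_rw [rj_sq (a m) (hunit m)]
      exact hEq m
    · rw [if_neg hmk, pair_exp hgm hgind _ _ (rfun_meas _) (rfun_meas _) m k hmk,
        pair_exp hgm hgind _ _ (jfun_meas _) (jfun_meas _) m k hmk, hEr m, hEj m]
      ring
  -- double sums
  have hGG : ∫ ω, (∑ m, qfun (g ω m)) * (∑ k, qfun (g ω k)) ∂μ
      = (M:ℝ)^2*βN^2 + M*βN^2 := by
    have he : (fun ω => (∑ m, qfun (g ω m)) * (∑ k, qfun (g ω k)))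
        = fun ω => ∑ m, ∑ k, qfun (g ω m) * qfun (g ω k) := by
      funext ω; rw [Finset.sum_mul_sum]
    rw [he, integral_finset_sum _ fun m _ => integrable_finset_sum _ fun k _ => Pqq m k]
    have h2 : ∀ m : Fin M, ∫ ω, ∑ k, qfun (g ω m) * qfun (g ω k) ∂μ
        = ∑ k, ∫ ω, qfun (g ω m) * qfun (g ω k) ∂μ :=
      fun m => integral_finset_sum _ fun k _ => Pqq m k
    simp_rw [h2, hqq, Finset.sum_add_distrib, Finset.sum_ite_eq, Finset.sum_const,
      Finset.card_univ, Finset.mem_univ, if_true, nsmul_eq_mul, Fintype.card_fin]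
    simp [Finset.sum_const, Finset.card_univ]
    ring
  have hRR : ∫ ω, (∑ m, rfun (a m) (g ω m)) * (∑ k, rfun (a k) (g ω k)) ∂μ
      = ∑ m, ∑ k, ∫ ω, rfun (a m) (g ω m) * rfun (a k) (g ω k) ∂μ := by
    have he : (fun ω => (∑ m, rfun (a m) (g ω m)) * (∑ k, rfun (a k) (g ω k)))
        = fun ω => ∑ m, ∑ k, rfun (a m) (g ω m) * rfun (a k) (g ω k) := by
      funext ω; rw [Finset.sum_mul_sum]
    rw [he, integral_finset_sum _ fun m _ => integrable_finset_sum _ fun k _ => Prr m k]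
    exact Finset.sum_congr rfl fun m _ => integral_finset_sum _ fun k _ => Prr m k
  have hJJ : ∫ ω, (∑ m, jfun (a m) (g ω m)) * (∑ k, jfun (a k) (g ω k)) ∂μ
      = ∑ m, ∑ k, ∫ ω, jfun (a m) (g ω m) * jfun (a k) (g ω k) ∂μ := by
    have he : (fun ω => (∑ m, jfun (a m) (g ω m)) * (∑ k, jfun (a k) (g ω k)))
        = fun ω => ∑ m, ∑ k, jfun (a m) (g ω m) * jfun (a k) (g ω k) := by
      funext ω; rw [Finset.sum_mul_sum]
    rw [he, integral_finset_sum _ fun m _ => integrable_finset_sum _ fun k _ => Pjj m k]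
    exact Finset.sum_congr rfl fun m _ => integral_finset_sum _ fun k _ => Pjj m k
  have hRRJJ : (∫ ω, (∑ m, rfun (a m) (g ω m)) * (∑ k, rfun (a k) (g ω k)) ∂μ)
      + (∫ ω, (∑ m, jfun (a m) (g ω m)) * (∑ k, jfun (a k) (g ω k)) ∂μ) = M * βN := by
    rw [hRR, hJJ, ← Finset.sum_add_distrib]
    have : ∀ m : Fin M, ((∑ k, ∫ ω, rfun (a m) (g ω m) * rfun (a k) (g ω k) ∂μ)
        + ∑ k, ∫ ω, jfun (a m) (g ω m) * jfun (a k) (g ω k) ∂μ) = βN := by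
      intro m
      rw [← Finset.sum_add_distrib]
      simp_rw [hrrjj]
      simp [Finset.sum_ite_eq]
    simp_rw [this]
    simp [Finset.card_univ, mul_comm]
  -- integrability of the main pieces
  have cosASM : AEStronglyMeasurable (fun ω => Real.cos (ψ ω)) μ :=
    (Real.measurable_cos.comp hψm).aestronglyMeasurable
  have sinASM : AEStronglyMeasurable (fun ω => Real.sin (ψ ω)) μ :=
    (Real.measurable_sin.comp hψm).aestronglyMeasurable
  have cos2ASM : AEStronglyMeasurable (fun ω => Real.cos (ψ ω) ^ 2) μ :=
    ((Real.measurable_cos.comp hψm).pow_const 2).aestronglyMeasurable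
  have sin2ASM : AEStronglyMeasurable (fun ω => Real.sin (ψ ω) ^ 2) μ :=
    ((Real.measurable_sin.comp hψm).pow_const 2).aestronglyMeasurable
  have sincosASM : AEStronglyMeasurable (fun ω => Real.sin (ψ ω) * Real.cos (ψ ω)) μ :=
    ((Real.measurable_sin.comp hψm).mul (Real.measurable_cos.comp hψm)).aestronglyMeasurable
  have cosbd : ∃ C, ∀ ω, ‖Real.cos (ψ ω)‖ ≤ C :=
    ⟨1, fun ω => by rw [Real.norm_eq_abs]; exact Real.abs_cos_le_one _⟩
  have sinbd : ∃ C, ∀ ω, ‖Real.sin (ψ ω)‖ ≤ C :=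
    ⟨1, fun ω => by rw [Real.norm_eq_abs]; exact Real.abs_sin_le_one _⟩
  have cos2bd : ∃ C, ∀ ω, ‖Real.cos (ψ ω) ^ 2‖ ≤ C :=
    ⟨1, fun ω => by
      rw [Real.norm_eq_abs, abs_of_nonneg (sq_nonneg _)]; exact Real.cos_sq_le_one _⟩
  have sin2bd : ∃ C, ∀ ω, ‖Real.sin (ψ ω) ^ 2‖ ≤ C :=
    ⟨1, fun ω => by
      rw [Real.norm_eq_abs, abs_of_nonneg (sq_nonneg _)]; exact Real.sin_sq_le_one _⟩
  have sincosbd : ∃ C, ∀ ω, ‖Real.sin (ψ ω) * Real.cos (ψ ω)‖ ≤ C :=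
    ⟨1, fun ω => by
      rw [Real.norm_eq_abs, abs_mul]
      exact mul_le_one₀ (Real.abs_sin_le_one _) (abs_nonneg _) (Real.abs_cos_le_one _)⟩
  have intW1 : Integrable (fun ω =>
      Real.cos (ψ ω) * ((2*c) * ∑ m, rfun (a m) (g ω m))) μ :=
    (hR_int.const_mul (2*c)).bdd_mul cosASM (Filter.Eventually.of_forall cosbd.choose_spec)
  have intW2 : Integrable (fun ω =>
      Real.sin (ψ ω) * ((2*c) * ∑ m, jfun (a m) (g ω m))) μ :=
    (hJ_int.const_mul (2*c)).bdd_mul sinASM (Filter.Eventually.of_forall sinbd.choose_spec)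
  have intS : Integrable S μ := by
    refine Integrable.congr (((integrable_const ((M : ℝ)*c^2)).add hG_int).add
      (intW1.add intW2)) (Filter.Eventually.of_forall fun ω => ?_)
    simp only [Pi.add_apply]
    rw [hS ω]; ring
  have ES : ∫ ω, S ω ∂μ = M * (c^2 + βN) := by
    have he : ∀ ω, S ω = ((M : ℝ)*c^2 + ∑ m, qfun (g ω m))
        + (Real.cos (ψ ω) * ((2*c) * ∑ m, rfun (a m) (g ω m))
          + Real.sin (ψ ω) * ((2*c) * ∑ m, jfun (a m) (g ω m))) := by
      intro ω; rw [hS ω]; ring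
    have hW1 : ∫ ω, Real.cos (ψ ω) * ((2*c) * ∑ m, rfun (a m) (g ω m)) ∂μ = 0 := by
      have h := hmix Real.cos (fun z => (2*c) * ∑ m, rfun (a m) (z m))
        Real.measurable_cos (mRz.const_mul _)
      rw [uniformAngle_cos, zero_mul] at h
      exact h
    have hW2 : ∫ ω, Real.sin (ψ ω) * ((2*c) * ∑ m, jfun (a m) (g ω m)) ∂μ = 0 := by
      have h := hmix Real.sin (fun z => (2*c) * ∑ m, jfun (a m) (z m))
        Real.measurable_sin (mJz.const_mul _)
      rw [uniformAngle_sin, zero_mul] at h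
      exact h
    have intKG : Integrable (fun ω => (M : ℝ)*c^2 + ∑ m, qfun (g ω m)) μ :=
      (integrable_const ((M : ℝ)*c^2)).add hG_int
    have intW : Integrable (fun ω =>
        Real.cos (ψ ω) * ((2*c) * ∑ m, rfun (a m) (g ω m))
        + Real.sin (ψ ω) * ((2*c) * ∑ m, jfun (a m) (g ω m))) μ := intW1.add intW2
    rw [integral_congr_ae (Filter.Eventually.of_forall he),
      integral_add intKG intW,
      integral_add (integrable_const ((M : ℝ)*c^2)) hG_int,
      integral_add intW1 intW2, hW1, hW2, hEG, integral_const]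
    simp
    ring
  -- second moment
  have GGint : Integrable (fun ω => (∑ m, qfun (g ω m)) * (∑ k, qfun (g ω k))) μ :=
    sum_prod_int hgm hgind hint4 _ _ (fun _ => qfun_meas) (fun _ => qfun_meas) hbq hbq
  have GRint : Integrable (fun ω => (∑ m, qfun (g ω m)) * (∑ k, rfun (a k) (g ω k))) μ :=
    sum_prod_int hgm hgind hint4 _ _ (fun _ => qfun_meas) (fun k => rfun_meas _) hbq hbr
  have GJint : Integrable (fun ω => (∑ m, qfun (g ω m)) * (∑ k, jfun (a k) (g ω k))) μ :=
    sum_prod_int hgm hgind hint4 _ _ (fun _ => qfun_meas) (fun k => jfun_meas _) hbq hbj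
  have RRint : Integrable (fun ω => (∑ m, rfun (a m) (g ω m)) * (∑ k, rfun (a k) (g ω k))) μ :=
    sum_prod_int hgm hgind hint4 _ _ (fun m => rfun_meas _) (fun k => rfun_meas _) hbr hbr
  have JJint : Integrable (fun ω => (∑ m, jfun (a m) (g ω m)) * (∑ k, jfun (a k) (g ω k))) μ :=
    sum_prod_int hgm hgind hint4 _ _ (fun m => jfun_meas _) (fun k => jfun_meas _) hbj hbj
  have RJint : Integrable (fun ω => (∑ m, rfun (a m) (g ω m)) * (∑ k, jfun (a k) (g ω k))) μ :=
    sum_prod_int hgm hgind hint4 _ _ (fun m => rfun_meas _) (fun k => jfun_meas _) hbr hbj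
  have intT1 : Integrable (fun ω => ((M : ℝ)*c^2 + ∑ m, qfun (g ω m))
      * ((M : ℝ)*c^2 + ∑ k, qfun (g ω k))) μ := by
    refine Integrable.congr (((integrable_const (((M : ℝ)*c^2)*((M : ℝ)*c^2))).add
      (hG_int.const_mul (2*((M : ℝ)*c^2)))).add GGint)
      (Filter.Eventually.of_forall fun ω => ?_)
    simp only [Pi.add_apply]
    ring
  have intX1 : Integrable (fun ω => (4*c) * (((M : ℝ)*c^2) * (∑ k, rfun (a k) (g ω k))
      + (∑ m, qfun (g ω m)) * (∑ k, rfun (a k) (g ω k)))) μ :=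
    ((hR_int.const_mul ((M : ℝ)*c^2)).add GRint).const_mul (4*c)
  have intX2 : Integrable (fun ω => (4*c) * (((M : ℝ)*c^2) * (∑ k, jfun (a k) (g ω k))
      + (∑ m, qfun (g ω m)) * (∑ k, jfun (a k) (g ω k)))) μ :=
    ((hJ_int.const_mul ((M : ℝ)*c^2)).add GJint).const_mul (4*c)
  have intT2a : Integrable (fun ω => Real.cos (ψ ω) * ((4*c) * (((M : ℝ)*c^2)
      * (∑ k, rfun (a k) (g ω k))
      + (∑ m, qfun (g ω m)) * (∑ k, rfun (a k) (g ω k))))) μ :=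
    intX1.bdd_mul cosASM (Filter.Eventually.of_forall cosbd.choose_spec)
  have intT2b : Integrable (fun ω => Real.sin (ψ ω) * ((4*c) * (((M : ℝ)*c^2)
      * (∑ k, jfun (a k) (g ω k))
      + (∑ m, qfun (g ω m)) * (∑ k, jfun (a k) (g ω k))))) μ :=
    intX2.bdd_mul sinASM (Filter.Eventually.of_forall sinbd.choose_spec)
  have intT3a : Integrable (fun ω => Real.cos (ψ ω) ^ 2 * ((4*c^2)
      * ((∑ m, rfun (a m) (g ω m)) * (∑ k, rfun (a k) (g ω k))))) μ :=
    (RRint.const_mul (4*c^2)).bdd_mul cos2ASM (Filter.Eventually.of_forall cos2bd.choose_spec)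
  have intT3b : Integrable (fun ω => (Real.sin (ψ ω) * Real.cos (ψ ω)) * ((8*c^2)
      * ((∑ m, rfun (a m) (g ω m)) * (∑ k, jfun (a k) (g ω k))))) μ :=
    (RJint.const_mul (8*c^2)).bdd_mul sincosASM (Filter.Eventually.of_forall sincosbd.choose_spec)
  have intT3c : Integrable (fun ω => Real.sin (ψ ω) ^ 2 * ((4*c^2)
      * ((∑ m, jfun (a m) (g ω m)) * (∑ k, jfun (a k) (g ω k))))) μ :=
    (JJint.const_mul (4*c^2)).bdd_mul sin2ASM (Filter.Eventually.of_forall sin2bd.choose_spec)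
  have hS2 : ∀ ω, S ω ^ 2 = (((M : ℝ)*c^2 + ∑ m, qfun (g ω m))
        * ((M : ℝ)*c^2 + ∑ k, qfun (g ω k))
      + (Real.cos (ψ ω) * ((4*c) * (((M : ℝ)*c^2) * (∑ k, rfun (a k) (g ω k))
          + (∑ m, qfun (g ω m)) * (∑ k, rfun (a k) (g ω k))))
        + Real.sin (ψ ω) * ((4*c) * (((M : ℝ)*c^2) * (∑ k, jfun (a k) (g ω k))
          + (∑ m, qfun (g ω m)) * (∑ k, jfun (a k) (g ω k))))))
      + (Real.cos (ψ ω) ^ 2 * ((4*c^2)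
          * ((∑ m, rfun (a m) (g ω m)) * (∑ k, rfun (a k) (g ω k))))
        + ((Real.sin (ψ ω) * Real.cos (ψ ω)) * ((8*c^2)
          * ((∑ m, rfun (a m) (g ω m)) * (∑ k, jfun (a k) (g ω k))))
        + Real.sin (ψ ω) ^ 2 * ((4*c^2)
          * ((∑ m, jfun (a m) (g ω m)) * (∑ k, jfun (a k) (g ω k)))))) := by
    intro ω; rw [hS ω]; ring
  have intS2 : Integrable (fun ω => S ω ^ 2) μ := by
    refine Integrable.congr ((intT1.add (intT2a.add intT2b)).add
      (intT3a.add (intT3b.add intT3c))) (Filter.Eventually.of_forall fun ω => ?_)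
    simp only [Pi.add_apply]
    rw [hS2 ω]
  have hT1 : ∫ ω, ((M : ℝ)*c^2 + ∑ m, qfun (g ω m))
      * ((M : ℝ)*c^2 + ∑ k, qfun (g ω k)) ∂μ
      = ((M : ℝ)*c^2)*((M : ℝ)*c^2) + 2*((M : ℝ)*c^2)*((M : ℝ)*βN)
        + ((M:ℝ)^2*βN^2 + (M : ℝ)*βN^2) := by
    have he : (fun ω => ((M : ℝ)*c^2 + ∑ m, qfun (g ω m))
        * ((M : ℝ)*c^2 + ∑ k, qfun (g ω k)))
        = fun ω => ((M : ℝ)*c^2)*((M : ℝ)*c^2)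
          + ((2*((M : ℝ)*c^2)) * (∑ m, qfun (g ω m))
          + (∑ m, qfun (g ω m)) * (∑ k, qfun (g ω k))) := by
      funext ω; ring
    have intB : Integrable (fun ω => (2*((M : ℝ)*c^2)) * (∑ m, qfun (g ω m))
        + (∑ m, qfun (g ω m)) * (∑ k, qfun (g ω k))) μ :=
      (hG_int.const_mul (2*((M : ℝ)*c^2))).add GGint
    rw [he, integral_add (integrable_const (((M : ℝ)*c^2)*((M : ℝ)*c^2))) intB,
      integral_add (hG_int.const_mul (2*((M : ℝ)*c^2))) GGint,
      integral_const, hGG, integral_const_mul, hEG]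
    simp
    ring
  have hT2a : ∫ ω, Real.cos (ψ ω) * ((4*c) * (((M : ℝ)*c^2)
      * (∑ k, rfun (a k) (g ω k))
      + (∑ m, qfun (g ω m)) * (∑ k, rfun (a k) (g ω k)))) ∂μ = 0 := by
    have h := hmix Real.cos (fun z => (4*c) * (((M : ℝ)*c^2) * (∑ k, rfun (a k) (z k))
        + (∑ m, qfun (z m)) * (∑ k, rfun (a k) (z k))))
      Real.measurable_cos (((mRz.const_mul _).add (mGz.mul mRz)).const_mul _)
    rw [uniformAngle_cos, zero_mul] at h
    exact h
  have hT2b : ∫ ω, Real.sin (ψ ω) * ((4*c) * (((M : ℝ)*c^2)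
      * (∑ k, jfun (a k) (g ω k))
      + (∑ m, qfun (g ω m)) * (∑ k, jfun (a k) (g ω k)))) ∂μ = 0 := by
    have h := hmix Real.sin (fun z => (4*c) * (((M : ℝ)*c^2) * (∑ k, jfun (a k) (z k))
        + (∑ m, qfun (z m)) * (∑ k, jfun (a k) (z k))))
      Real.measurable_sin (((mJz.const_mul _).add (mGz.mul mJz)).const_mul _)
    rw [uniformAngle_sin, zero_mul] at h
    exact h
  have hT3a : ∫ ω, Real.cos (ψ ω) ^ 2 * ((4*c^2)
      * ((∑ m, rfun (a m) (g ω m)) * (∑ k, rfun (a k) (g ω k)))) ∂μ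
      = (1/2) * ((4*c^2)
        * ∫ ω, (∑ m, rfun (a m) (g ω m)) * (∑ k, rfun (a k) (g ω k)) ∂μ) := by
    have h := hmix (fun t => Real.cos t ^ 2)
      (fun z => (4*c^2) * ((∑ m, rfun (a m) (z m)) * (∑ k, rfun (a k) (z k))))
      (Real.measurable_cos.pow_const 2) ((mRz.mul mRz).const_mul _)
    rw [uniformAngle_cos_sq] at h
    rw [h, integral_const_mul]
  have hT3b : ∫ ω, (Real.sin (ψ ω) * Real.cos (ψ ω)) * ((8*c^2)
      * ((∑ m, rfun (a m) (g ω m)) * (∑ k, jfun (a k) (g ω k)))) ∂μ = 0 := by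
    have h := hmix (fun t => Real.sin t * Real.cos t)
      (fun z => (8*c^2) * ((∑ m, rfun (a m) (z m)) * (∑ k, jfun (a k) (z k))))
      (Real.measurable_sin.mul Real.measurable_cos) ((mRz.mul mJz).const_mul _)
    rw [uniformAngle_sin_cos, zero_mul] at h
    exact h
  have hT3c : ∫ ω, Real.sin (ψ ω) ^ 2 * ((4*c^2)
      * ((∑ m, jfun (a m) (g ω m)) * (∑ k, jfun (a k) (g ω k)))) ∂μ
      = (1/2) * ((4*c^2)
        * ∫ ω, (∑ m, jfun (a m) (g ω m)) * (∑ k, jfun (a k) (g ω k)) ∂μ) := by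
    have h := hmix (fun t => Real.sin t ^ 2)
      (fun z => (4*c^2) * ((∑ m, jfun (a m) (z m)) * (∑ k, jfun (a k) (z k))))
      (Real.measurable_sin.pow_const 2) ((mJz.mul mJz).const_mul _)
    rw [uniformAngle_sin_sq] at h
    rw [h, integral_const_mul]
  have ES2 : ∫ ω, S ω ^ 2 ∂μ = (M:ℝ)^2*(c^2+βN)^2 + M*(βN^2 + 2*c^2*βN) := by
    have intT2 : Integrable (fun ω =>
        Real.cos (ψ ω) * ((4*c) * (((M : ℝ)*c^2) * (∑ k, rfun (a k) (g ω k))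
          + (∑ m, qfun (g ω m)) * (∑ k, rfun (a k) (g ω k))))
        + Real.sin (ψ ω) * ((4*c) * (((M : ℝ)*c^2) * (∑ k, jfun (a k) (g ω k))
          + (∑ m, qfun (g ω m)) * (∑ k, jfun (a k) (g ω k))))) μ := intT2a.add intT2b
    have intT3bc : Integrable (fun ω =>
        (Real.sin (ψ ω) * Real.cos (ψ ω)) * ((8*c^2)
          * ((∑ m, rfun (a m) (g ω m)) * (∑ k, jfun (a k) (g ω k))))
        + Real.sin (ψ ω) ^ 2 * ((4*c^2)
          * ((∑ m, jfun (a m) (g ω m)) * (∑ k, jfun (a k) (g ω k))))) μ :=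
      intT3b.add intT3c
    have intT3 : Integrable (fun ω =>
        Real.cos (ψ ω) ^ 2 * ((4*c^2)
          * ((∑ m, rfun (a m) (g ω m)) * (∑ k, rfun (a k) (g ω k))))
        + ((Real.sin (ψ ω) * Real.cos (ψ ω)) * ((8*c^2)
          * ((∑ m, rfun (a m) (g ω m)) * (∑ k, jfun (a k) (g ω k))))
        + Real.sin (ψ ω) ^ 2 * ((4*c^2)
          * ((∑ m, jfun (a m) (g ω m)) * (∑ k, jfun (a k) (g ω k)))))) μ :=
      intT3a.add intT3bc
    have intL : Integrable (fun ω => ((M : ℝ)*c^2 + ∑ m, qfun (g ω m))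
        * ((M : ℝ)*c^2 + ∑ k, qfun (g ω k))
        + (Real.cos (ψ ω) * ((4*c) * (((M : ℝ)*c^2) * (∑ k, rfun (a k) (g ω k))
            + (∑ m, qfun (g ω m)) * (∑ k, rfun (a k) (g ω k))))
          + Real.sin (ψ ω) * ((4*c) * (((M : ℝ)*c^2) * (∑ k, jfun (a k) (g ω k))
            + (∑ m, qfun (g ω m)) * (∑ k, jfun (a k) (g ω k)))))) μ := intT1.add intT2
    rw [integral_congr_ae (Filter.Eventually.of_forall hS2),
      integral_add intL intT3,
      integral_add intT1 intT2,
      integral_add intT2a intT2b,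
      integral_add intT3a intT3bc,
      integral_add intT3b intT3c,
      hT1, hT2a, hT2b, hT3a, hT3b, hT3c]
    linear_combination (2*c^2) * hRRJJ
  exact ⟨intS, intS2, ES, ES2⟩

end core2


/-- A Rician channel block with parameters `(ξ, βL, βN, a)`: a random vector
`h = ξ·√βL·e^{−iψ}·a + g ∈ ℂ^M`, where `ξ ∈ {0,1}`, `βL, βN ≥ 0`, `a` is a deterministic
vector with unit-modulus entries, `ψ` is uniformly distributed on `[0, 2π)`, and `g` is
independent of `ψ` with independent coordinates satisfying `E[g_m] = 0`, `E[g_m²] = 0`,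
`E[|g_m|²] = βN` and `E[|g_m|⁴] = 2βN²` (as for `CN(0, βN)`). -/
structure IsRicianBlock {Ω : Type*} [MeasurableSpace Ω] (μ : Measure Ω) {M : ℕ}
    (ξ βL βN : ℝ) (a : Fin M → ℂ) (h : Ω → Fin M → ℂ) : Prop where
  xi01 : ξ = 0 ∨ ξ = 1
  betaL_nonneg : 0 ≤ βL
  betaN_nonneg : 0 ≤ βN
  unit_modulus : ∀ m, ‖a m‖ = 1
  decomp : ∃ (ψ : Ω → ℝ) (g : Ω → Fin M → ℂ),
      Measurable ψ ∧ Measurable g ∧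
      (∀ ω m, h ω m
        = (ξ : ℂ) * (Real.sqrt βL : ℂ) * Complex.exp (-(Complex.I * (ψ ω : ℂ))) * a m
          + g ω m) ∧
      μ.map ψ = uniformAngle ∧
      IndepFun ψ g μ ∧
      iIndepFun (fun m ω => g ω m) μ ∧
      (∀ m, Integrable (fun ω => ‖g ω m‖ ^ 4) μ) ∧
      (∀ m, ∫ ω, g ω m ∂μ = 0) ∧
      (∀ m, ∫ ω, (g ω m) ^ 2 ∂μ = 0) ∧
      (∀ m, ∫ ω, (‖g ω m‖ ^ 2 : ℝ) ∂μ = βN) ∧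
      (∀ m, ∫ ω, (‖g ω m‖ ^ 4 : ℝ) ∂μ = 2 * βN ^ 2)

lemma block_moments {Ω : Type*} [MeasurableSpace Ω] {μ : Measure Ω} [IsProbabilityMeasure μ]
    {M : ℕ} {ξ βL βN : ℝ} {a : Fin M → ℂ} {h : Ω → Fin M → ℂ}
    (hR : IsRicianBlock μ ξ βL βN a h) :
    (Integrable (fun ω => ∑ m, ‖h ω m‖ ^ 2) μ) ∧
    (Integrable (fun ω => (∑ m, ‖h ω m‖ ^ 2) ^ 2) μ) ∧
    (∫ ω, ∑ m, ‖h ω m‖ ^ 2 ∂μ = M * (ξ*βL + βN)) ∧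
    (∫ ω, (∑ m, ‖h ω m‖ ^ 2) ^ 2 ∂μ
      = (M:ℝ)^2*(ξ*βL+βN)^2 + M*(βN^2 + 2*ξ*βL*βN)) := by
  obtain ⟨ψ, g, hψm, hgm, hdec, hmap, hψg, hgind, hint4, hEg, hEg2, hE2, hE4⟩ := hR.decomp
  set c : ℝ := ξ * Real.sqrt βL with hc
  have hc2 : c^2 = ξ * βL := by
    have hξ : ξ^2 = ξ := by rcases hR.xi01 with h'|h' <;> simp [h']
    rw [hc, mul_pow, hξ, Real.sq_sqrt hR.betaL_nonneg]
  have hS : ∀ ω, (∑ m, ‖h ω m‖ ^ 2)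
      = M * c^2 + (∑ m, qfun (g ω m))
        + 2*c*(Real.cos (ψ ω) * ∑ m, rfun (a m) (g ω m)
             + Real.sin (ψ ω) * ∑ m, jfun (a m) (g ω m)) := by
    intro ω
    have hterm : ∀ m, ‖h ω m‖ ^ 2
        = c^2 + qfun (g ω m) + 2*c*(Real.cos (ψ ω) * rfun (a m) (g ω m)
            + Real.sin (ψ ω) * jfun (a m) (g ω m)) := by
      intro m
      have hcast : ((ξ:ℂ) * (Real.sqrt βL : ℂ)) = ((c : ℝ) : ℂ) := by
        rw [hc]; push_cast; ring
      rw [hdec ω m, show (ξ:ℂ) * (Real.sqrt βL : ℂ)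
          * Complex.exp (-(Complex.I * (ψ ω : ℂ))) * a m
          = ((c:ℝ):ℂ) * Complex.exp (-(Complex.I * (ψ ω:ℂ))) * a m by rw [hcast]]
      simpa only [qfun, rfun, jfun] using
        coord_abs c (ψ ω) (a m) (g ω m) (hR.unit_modulus m)
    rw [Finset.sum_congr rfl fun m _ => hterm m]
    simp only [Finset.sum_add_distrib, ← Finset.mul_sum, Finset.sum_const,
      Finset.card_univ, nsmul_eq_mul, Fintype.card_fin]
  obtain ⟨i1, i2, e1, e2⟩ := core_moments hψm hgm hmap hψg hgind hint4 hEg hE2 hE4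
    hR.unit_modulus c _ hS
  refine ⟨i1, i2, ?_, ?_⟩
  · rw [e1, hc2]
  · rw [e2, hc2]; ring

/-- For jointly independent Rician channel blocks `h̃_1, …, h̃_{N₀}` and a
binary selection vector `χ ∈ {0,1}^{N₀}`, with `β_j = ξ_j·βL_j + βN_j`,
`E[(∑_j χ_j ‖h̃_j‖²)²] = M²·(∑_j χ_j β_j)² + M·∑_j χ_j·(βN_j² + 2·ξ_j·βL_j·βN_j)`. -/
theorem stmt8 {Ω : Type*} [MeasurableSpace Ω] (μ : Measure Ω) [IsProbabilityMeasure μ]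
    (N₀ M : ℕ) (hN₀ : 0 < N₀) (hM : 0 < M)
    (χ : Fin N₀ → ℝ) (hχ : ∀ j, χ j = 0 ∨ χ j = 1)
    (ξ βL βN : Fin N₀ → ℝ) (a : Fin N₀ → Fin M → ℂ) (h : Fin N₀ → Ω → Fin M → ℂ)
    (hR : ∀ j, IsRicianBlock μ (ξ j) (βL j) (βN j) (a j) (h j))
    (hindep : iIndepFun (fun j => h j) μ) :
    ∫ ω, (∑ j, χ j * ∑ m, ‖h j ω m‖ ^ 2) ^ 2 ∂μ
      = (M : ℝ) ^ 2 * (∑ j, χ j * (ξ j * βL j + βN j)) ^ 2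
        + M * ∑ j, χ j * (βN j ^ 2 + 2 * ξ j * βL j * βN j) := by
  have hBM := fun j => block_moments (hR j)
  have hint : ∀ j, Integrable (fun ω => ∑ m, ‖h j ω m‖ ^ 2) μ :=
    fun j => (hBM j).1
  have hint2 : ∀ j, Integrable (fun ω => (∑ m, ‖h j ω m‖ ^ 2) ^ 2) μ :=
    fun j => (hBM j).2.1
  have hme : ∀ j, ∫ ω, ∑ m, ‖h j ω m‖ ^ 2 ∂μ
      = M * (ξ j * βL j + βN j) := fun j => (hBM j).2.2.1
  have hme2 : ∀ j, ∫ ω, (∑ m, ‖h j ω m‖ ^ 2) ^ 2 ∂μ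
      = (M:ℝ)^2*(ξ j*βL j+βN j)^2 + M*(βN j^2 + 2*ξ j*βL j*βN j) :=
    fun j => (hBM j).2.2.2
  have mφ : Measurable (fun z : Fin M → ℂ => ∑ m, ‖z m‖ ^ 2) :=
    Finset.measurable_sum _ fun m _ =>
      ((continuous_norm.pow 2).measurable).comp (measurable_pi_apply m)
  have hindS : ∀ j k, j ≠ k → IndepFun (fun ω => ∑ m, ‖h j ω m‖ ^ 2)
      (fun ω => ∑ m, ‖h k ω m‖ ^ 2) μ :=
    fun j k hjk => (hindep.indepFun hjk).comp mφ mφ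
  have hprod_int : ∀ j k, Integrable (fun ω =>
      (∑ m, ‖h j ω m‖ ^ 2) * (∑ m, ‖h k ω m‖ ^ 2)) μ := by
    intro j k
    rcases eq_or_ne j k with rfl | hjk
    · exact (hint2 j).congr (Filter.Eventually.of_forall fun ω => pow_two _)
    · exact (hindS j k hjk).integrable_mul (hint j) (hint k)
  have hprodE : ∀ j k, ∫ ω, (∑ m, ‖h j ω m‖ ^ 2)
        * (∑ m, ‖h k ω m‖ ^ 2) ∂μ
      = ((M:ℝ) * (ξ j*βL j+βN j)) * ((M:ℝ) * (ξ k*βL k+βN k))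
        + (if j = k then (M:ℝ)*(βN j^2 + 2*ξ j*βL j*βN j) else 0) := by
    intro j k
    rcases eq_or_ne j k with rfl | hjk
    · rw [if_pos rfl]
      have he : ∫ ω, (∑ m, ‖h j ω m‖ ^ 2)
          * (∑ m, ‖h j ω m‖ ^ 2) ∂μ
          = ∫ ω, (∑ m, ‖h j ω m‖ ^ 2) ^ 2 ∂μ := by
        apply integral_congr_ae
        filter_upwards with ω
        rw [sq]
      rw [he, hme2 j]; ring
    · rw [if_neg hjk,
        (hindS j k hjk).integral_fun_mul_eq_mul_integral (hint j).aestronglyMeasurable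
          (hint k).aestronglyMeasurable,
        hme j, hme k]
      ring
  have hexp : ∀ ω : Ω, (∑ j, χ j * ∑ m, ‖h j ω m‖ ^ 2) ^ 2
      = ∑ j, ∑ k, (χ j * χ k) * ((∑ m, ‖h j ω m‖ ^ 2)
          * (∑ m, ‖h k ω m‖ ^ 2)) := by
    intro ω
    rw [sq, Finset.sum_mul_sum]
    exact Finset.sum_congr rfl fun j _ => Finset.sum_congr rfl fun k _ => by ring
  rw [integral_congr_ae (Filter.Eventually.of_forall hexp),
    integral_finset_sum _ fun j _ =>
      integrable_finset_sum _ fun k _ => (hprod_int j k).const_mul _]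
  have hin : ∀ j : Fin N₀, ∫ ω, ∑ k, (χ j * χ k) * ((∑ m, ‖h j ω m‖ ^ 2)
      * (∑ m, ‖h k ω m‖ ^ 2)) ∂μ
      = ∑ k, ∫ ω, (χ j * χ k) * ((∑ m, ‖h j ω m‖ ^ 2)
        * (∑ m, ‖h k ω m‖ ^ 2)) ∂μ :=
    fun j => integral_finset_sum _ fun k _ => (hprod_int j k).const_mul _
  simp_rw [hin, integral_const_mul, hprodE]
  have hterm : ∀ j k : Fin N₀, χ j * χ k * (((M:ℝ) * (ξ j*βL j+βN j))
        * ((M:ℝ) * (ξ k*βL k+βN k))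
        + (if j = k then (M:ℝ)*(βN j^2 + 2*ξ j*βL j*βN j) else 0))
      = (χ j * (ξ j*βL j+βN j)) * (χ k * (ξ k*βL k+βN k)) * (M:ℝ)^2
        + (if j = k then χ j * ((M:ℝ)*(βN j^2 + 2*ξ j*βL j*βN j)) else 0) := by
    intro j k
    rcases eq_or_ne j k with rfl | hjk
    · rw [if_pos rfl, if_pos rfl]
      rcases hχ j with h' | h' <;> rw [h'] <;> ring
    · rw [if_neg hjk, if_neg hjk]; ring
  simp_rw [hterm, Finset.sum_add_distrib, Finset.sum_ite_eq, Finset.mem_univ, if_true]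
  have h1 : ∑ j, ∑ k, (χ j * (ξ j*βL j+βN j)) * (χ k * (ξ k*βL k+βN k)) * (M:ℝ)^2
      = (M:ℝ)^2 * (∑ j, χ j * (ξ j * βL j + βN j)) ^ 2 := by
    rw [pow_two (∑ j, χ j * (ξ j * βL j + βN j)), Finset.sum_mul_sum, Finset.mul_sum]
    exact Finset.sum_congr rfl fun j _ => by
      rw [Finset.mul_sum]
      exact Finset.sum_congr rfl fun k _ => by ring
  have h2 : ∑ j, χ j * ((M:ℝ)*(βN j^2 + 2*ξ j*βL j*βN j))
      = (M:ℝ) * ∑ j, χ j * (βN j^2 + 2*ξ j*βL j*βN j) := by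
    rw [Finset.mul_sum]
    exact Finset.sum_congr rfl fun j _ => by ring
  rw [h1, h2]
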